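/- Let Φ be a real m×n matrix and D an n×n diagonal matrix with positive diagonal entries such that A = Φ D Φᵀ is invertible (hence symmetric positive definite), let d_max denote the largest diagonal entry of D, and let λ_min > 0 denote the smallest eigenvalue of A. Then for every w ∈ ℝ^n, ‖A^{-1} Φ D w‖² ≤ (d_max/λ_min) · ‖w‖², where ‖·‖ is the Euclidean norm. -/

import Mathlib

open Matrix

private lemma euclid_norm_sq (k : ℕ) (v : Fin k → ℝ) :
    ‖(EuclideanSpace.equiv (Fin k) ℝ).symm v‖ ^ 2 = v ⬝ᵥ v := by
  rw [EuclideanSpace.norm_eq, Real.sq_sqrt (by positivity)]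
  simp [dotProduct, sq, Real.norm_eq_abs, abs_mul_abs_self]

/-- Lower bound on the quadratic form by the least element of the spectrum. -/
private lemma quad_lower_bound (k : ℕ) (A : Matrix (Fin k) (Fin k) ℝ)
    (hAsym : Aᵀ = A) (lam : ℝ) (hlam : IsLeast (spectrum ℝ A) lam)
    (x : Fin k → ℝ) : lam * (x ⬝ᵥ x) ≤ x ⬝ᵥ (A *ᵥ x) := by
  have hBherm : (A - lam • 1).IsHermitian := by
    unfold Matrix.IsHermitian
    rw [conjTranspose_eq_transpose_of_trivial]
    simp [transpose_sub, hAsym, transpose_smul]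
  have hBpsd : (A - lam • 1).PosSemidef := by
    refine hBherm.posSemidef_iff_eigenvalues_nonneg.mpr fun i => (?_ : (0 : ℝ) ≤ _)
    have hmem : hBherm.eigenvalues i ∈ spectrum ℝ (A - lam • 1) :=
      hBherm.eigenvalues_mem_spectrum_real i
    have hkey : algebraMap ℝ (Matrix (Fin k) (Fin k) ℝ) (hBherm.eigenvalues i + lam) - A
        = algebraMap ℝ (Matrix (Fin k) (Fin k) ℝ) (hBherm.eigenvalues i) - (A - lam • 1) := by
      rw [map_add, Algebra.algebraMap_eq_smul_one lam]
      abel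
    have hmemA : hBherm.eigenvalues i + lam ∈ spectrum ℝ A := by
      rw [spectrum.mem_iff] at hmem ⊢
      rwa [hkey]
    have := hlam.2 hmemA
    linarith
  have h0 := hBpsd.dotProduct_mulVec_nonneg x
  have hsx : star x = x := rfl
  rw [hsx] at h0
  have hmv : (A - lam • 1) *ᵥ x = A *ᵥ x - lam • x := by
    rw [Matrix.sub_mulVec, Matrix.smul_mulVec, Matrix.one_mulVec]
  rw [hmv, dotProduct_sub, dotProduct_smul] at h0
  have hsm : lam • (x ⬝ᵥ x) = lam * (x ⬝ᵥ x) := rfl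
  rw [hsm] at h0
  linarith

/-- A symmetric idempotent matrix is a contraction in the quadratic-form sense. -/
private lemma proj_dot_le (k : ℕ) (P : Matrix (Fin k) (Fin k) ℝ)
    (hPsym : Pᵀ = P) (hPP : P * P = P) (x : Fin k → ℝ) :
    x ⬝ᵥ (P *ᵥ x) ≤ x ⬝ᵥ x := by
  have h1 : x ⬝ᵥ (P *ᵥ x) = (x ᵥ* P) ⬝ᵥ x := by rw [Matrix.dotProduct_mulVec]
  have hyy : (P *ᵥ x) ⬝ᵥ (P *ᵥ x) = x ⬝ᵥ (P *ᵥ x) := by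
    rw [h1, Matrix.dotProduct_mulVec, Matrix.vecMul_mulVec, hPsym, hPP]
  have hs0 : 0 ≤ x ⬝ᵥ (P *ᵥ x) := by
    rw [← hyy]
    exact Finset.sum_nonneg fun i _ => mul_self_nonneg _
  have hxx0 : 0 ≤ x ⬝ᵥ x := Finset.sum_nonneg fun i _ => mul_self_nonneg _
  have hcs : (x ⬝ᵥ (P *ᵥ x)) ^ 2 ≤ (x ⬝ᵥ x) * ((P *ᵥ x) ⬝ᵥ (P *ᵥ x)) := by
    have h := Finset.sum_mul_sq_le_sq_mul_sq Finset.univ x (P *ᵥ x)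
    simp only [dotProduct, pow_two] at h ⊢
    convert h using 2
  rw [hyy] at hcs
  nlinarith [hcs, hs0, hxx0]

private lemma psym_aux (m k : ℕ) (M : Matrix (Fin m) (Fin k) ℝ)
    (B : Matrix (Fin m) (Fin m) ℝ) (hB : Bᵀ = B) : (Mᵀ * B * M)ᵀ = Mᵀ * B * M := by
  rw [Matrix.transpose_mul, Matrix.transpose_mul, Matrix.transpose_transpose,
    hB, Matrix.mul_assoc]

/-- Quadratic-form identity for `v = A⁻¹ M x`. -/
private lemma quad_eq (m k : ℕ) (M : Matrix (Fin m) (Fin k) ℝ)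
    (A : Matrix (Fin m) (Fin m) ℝ) (hAinv : A * A⁻¹ = 1) (hAinvsym : A⁻¹ᵀ = A⁻¹)
    (x : Fin k → ℝ) :
    ((A⁻¹ * M) *ᵥ x) ⬝ᵥ (A *ᵥ ((A⁻¹ * M) *ᵥ x)) = x ⬝ᵥ ((Mᵀ * A⁻¹ * M) *ᵥ x) := by
  have hAv : A * (A⁻¹ * M) = M := by
    rw [← Matrix.mul_assoc, hAinv, Matrix.one_mul]
  rw [Matrix.mulVec_mulVec, hAv, Matrix.dotProduct_mulVec ((A⁻¹ * M) *ᵥ x) M x,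
    Matrix.vecMul_mulVec, Matrix.transpose_mul, hAinvsym, Matrix.dotProduct_mulVec x,
    Matrix.mul_assoc]

theorem global_update_norm_bound (m n : ℕ)
    (Φ : Matrix (Fin m) (Fin n) ℝ) (d : Fin n → ℝ) (hd : ∀ i, 0 < d i)
    (D : Matrix (Fin n) (Fin n) ℝ) (hD : D = Matrix.diagonal d)
    (A : Matrix (Fin m) (Fin m) ℝ) (hA : A = Φ * D * Φᵀ)
    (hinv : IsUnit A)
    (dmax : ℝ) (hmax : IsGreatest (Set.range d) dmax)
    (lam : ℝ) (hlam : IsLeast (spectrum ℝ A) lam) (hlampos : 0 < lam) :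
    ∀ w : Fin n → ℝ,
      ‖(EuclideanSpace.equiv (Fin m) ℝ).symm ((A⁻¹ * Φ * D) *ᵥ w)‖ ^ 2 ≤
        (dmax / lam) * ‖(EuclideanSpace.equiv (Fin n) ℝ).symm w‖ ^ 2 := by
  intro w
  rw [euclid_norm_sq, euclid_norm_sq]
  -- square root of D
  set e : Fin n → ℝ := fun i => Real.sqrt (d i) with he
  set E : Matrix (Fin n) (Fin n) ℝ := Matrix.diagonal e with hE
  have hEE : E * E = D := by
    rw [hE, hD, Matrix.diagonal_mul_diagonal]
    exact congrArg Matrix.diagonal (funext fun i => Real.mul_self_sqrt (hd i).le)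
  have hEsym : Eᵀ = E := Matrix.diagonal_transpose e
  set M : Matrix (Fin m) (Fin n) ℝ := Φ * E with hM
  have hAM : A = M * Mᵀ := by
    rw [hA, hM, Matrix.transpose_mul, hEsym, ← hEE]
    simp only [Matrix.mul_assoc]
  have hAsym : Aᵀ = A := by
    rw [hAM, Matrix.transpose_mul, Matrix.transpose_transpose]
  have hdet : IsUnit A.det := (Matrix.isUnit_iff_isUnit_det A).mp hinv
  have hinvA : A⁻¹ * A = 1 := Matrix.nonsing_inv_mul A hdet
  have hAinv : A * A⁻¹ = 1 := Matrix.mul_nonsing_inv A hdet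
  have hAinvsym : (A⁻¹)ᵀ = A⁻¹ := by
    rw [Matrix.transpose_nonsing_inv, hAsym]
  -- the projection matrix
  have hPsym : (Mᵀ * A⁻¹ * M)ᵀ = Mᵀ * A⁻¹ * M := psym_aux m n M A⁻¹ hAinvsym
  have hPP : (Mᵀ * A⁻¹ * M) * (Mᵀ * A⁻¹ * M) = Mᵀ * A⁻¹ * M := by
    simp only [Matrix.mul_assoc]
    rw [← Matrix.mul_assoc M Mᵀ, ← hAM, ← Matrix.mul_assoc A A⁻¹, hAinv, Matrix.one_mul]
  set x : Fin n → ℝ := E *ᵥ w with hx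
  set v : Fin m → ℝ := (A⁻¹ * Φ * D) *ᵥ w with hv
  -- v = (A⁻¹ * M) *ᵥ x
  have hvx : v = (A⁻¹ * M) *ᵥ x := by
    rw [hv, hx, Matrix.mulVec_mulVec, hM, ← hEE]
    congr 1
    simp only [Matrix.mul_assoc]
  -- quadratic form identity : v ⬝ᵥ A v = x ⬝ᵥ P x
  have hquad : v ⬝ᵥ (A *ᵥ v) = x ⬝ᵥ ((Mᵀ * A⁻¹ * M) *ᵥ x) := by
    rw [hvx]; exact quad_eq m n M A hAinv hAinvsym x
  have hproj : x ⬝ᵥ ((Mᵀ * A⁻¹ * M) *ᵥ x) ≤ x ⬝ᵥ x :=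
    proj_dot_le n (Mᵀ * A⁻¹ * M) hPsym hPP x
  -- lower bound by the least eigenvalue
  have hAx : lam * (v ⬝ᵥ v) ≤ v ⬝ᵥ (A *ᵥ v) := quad_lower_bound m A hAsym lam hlam v
  rw [hquad] at hAx
  -- bound x ⬝ᵥ x by dmax * (w ⬝ᵥ w)
  have hxi : ∀ i, x i = e i * w i := fun i => by rw [hx, hE, Matrix.mulVec_diagonal]
  have hxxbound : x ⬝ᵥ x ≤ dmax * (w ⬝ᵥ w) := by
    have hsum : x ⬝ᵥ x = ∑ i, d i * (w i * w i) := by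
      apply Finset.sum_congr rfl
      intro i _
      calc x i * x i = (e i * w i) * (e i * w i) := by rw [hxi]
        _ = (e i * e i) * (w i * w i) := by ring
        _ = d i * (w i * w i) := by rw [he, Real.mul_self_sqrt (hd i).le]
    rw [hsum]
    calc ∑ i, d i * (w i * w i) ≤ ∑ i, dmax * (w i * w i) :=
          Finset.sum_le_sum fun i _ =>
            mul_le_mul_of_nonneg_right (hmax.2 ⟨i, rfl⟩) (mul_self_nonneg _)
      _ = dmax * (w ⬝ᵥ w) := by rw [← Finset.mul_sum]; rfl
  rw [div_mul_eq_mul_div, le_div_iff₀ hlampos]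
  nlinarith [hAx, hproj, hxxbound]
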